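/- Let A be a commutative ring and B a commutative A-algebra that is free of finite rank n as an A-module. Then the B-module of Kähler differentials Ω_{B/A} is finitely presented, and for every element b of its 0th Fitting ideal F₀(Ω_{B/A}) (an ideal of B), the discriminant Disc(B/A) of any A-basis of B divides the norm N_{B/A}(b) in A. -/

import Mathlib

open TensorProduct

section Aux

open MvPolynomial

variable {A B : Type*} [CommRing A] [CommRing B] [Algebra A B] {n : ℕ}



/-- The `A`-linear "coordinate lift" of `B` into the polynomial ring. -/
noncomputable def linB (ε : Module.Basis (Fin n) A B) : B →ₗ[A] MvPolynomial (Fin n) A where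
  toFun b := ∑ k, ε.repr b k • X k
  map_add' x y := by simp [map_add, Finsupp.add_apply, add_smul, Finset.sum_add_distrib]
  map_smul' a x := by simp [map_smul, Finsupp.smul_apply, smul_smul, Finset.smul_sum]

lemma aeval_linB (ε : Module.Basis (Fin n) A B) (b : B) :
    aeval (ε : Fin n → B) (linB ε b) = b := by
  have : aeval (ε : Fin n → B) ((∑ k, ε.repr b k • X k : MvPolynomial (Fin n) A)) = ∑ k, ε.repr b k • ε k := by
    rw [map_sum]
    refine Finset.sum_congr rfl fun k _ => ?_
    rw [smul_eq_C_mul, map_mul, aeval_X, aeval_C, ← Algebra.smul_def]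
  rw [linB]
  dsimp
  rw [this, Module.Basis.sum_repr]

/-- A finite presentation of `B` as an `A`-algebra, from a finite basis, via structure
constants. -/
noncomputable def presOf (ε : Module.Basis (Fin n) A B) : Algebra.Presentation A B (Fin n) (Option (Fin n × Fin n)) where
  val := ε
  σ' := fun b => linB ε b
  aeval_val_σ' := aeval_linB ε
  relation := fun o => o.elim (1 - linB ε 1)
      (fun p => X p.1 * X p.2 - linB ε (ε p.1 * ε p.2))
  span_range_relation_eq_ker := by
    classical
    set J : Ideal (MvPolynomial (Fin n) A) := Ideal.span (Set.range fun o : Option (Fin n × Fin n)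
      => o.elim (1 - linB ε 1) (fun p => X p.1 * X p.2 - linB ε (ε p.1 * ε p.2))) with hJ
    have h1J : (1 : MvPolynomial (Fin n) A) - linB ε 1 ∈ J :=
      Ideal.subset_span ⟨none, rfl⟩
    have hXJ : ∀ i j : Fin n, X i * X j - linB ε (ε i * ε j) ∈ J :=
      fun i j => Ideal.subset_span ⟨some (i, j), rfl⟩
    have mulX : ∀ (b : B) (i : Fin n), linB ε b * X i - linB ε (b * ε i) ∈ J := by
      intro b i
      have hb : b * ε i = ∑ k, ε.repr b k • (ε k * ε i) := by
        conv_lhs => rw [← Module.Basis.sum_repr ε b]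
        rw [Finset.sum_mul]
        exact Finset.sum_congr rfl fun k _ => smul_mul_assoc _ _ _
      have h2 : linB ε b * X i - linB ε (b * ε i)
          = ∑ k, ε.repr b k • (X k * X i - linB ε (ε k * ε i)) := by
        rw [hb, map_sum]
        show (∑ k, ε.repr b k • X k) * X i - _ = _
        rw [Finset.sum_mul, ← Finset.sum_sub_distrib]
        refine Finset.sum_congr rfl fun k _ => ?_
        rw [map_smul, smul_sub, smul_mul_assoc]
      rw [h2]
      exact Submodule.sum_mem _ fun k _ => Submodule.smul_of_tower_mem _ _ (hXJ k i)
    have key : ∀ p : MvPolynomial (Fin n) A,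
        p - linB ε (aeval (ε : Fin n → B) p) ∈ J := by
      intro p
      induction p using MvPolynomial.induction_on with
      | C a =>
        have : (C a : MvPolynomial (Fin n) A) - linB ε (aeval (ε : Fin n → B) (C a))
            = a • ((1 : MvPolynomial (Fin n) A) - linB ε 1) := by
          rw [aeval_C, smul_sub]
          congr 1
          · rw [Algebra.smul_def, mul_one, algebraMap_eq]
          · rw [← map_smul, Algebra.smul_def, mul_one]
        rw [this]
        exact Submodule.smul_of_tower_mem _ _ h1J
      | add p q hp hq =>
        have : p + q - linB ε (aeval (ε : Fin n → B) (p + q))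
            = (p - linB ε (aeval (ε : Fin n → B) p))
              + (q - linB ε (aeval (ε : Fin n → B) q)) := by
          rw [map_add, map_add]; ring
        rw [this]
        exact Submodule.add_mem _ hp hq
      | mul_X p i hp =>
        have : p * X i - linB ε (aeval (ε : Fin n → B) (p * X i))
            = (p - linB ε (aeval (ε : Fin n → B) p)) * X i
              + (linB ε (aeval (ε : Fin n → B) p) * X i
                  - linB ε (aeval (ε : Fin n → B) p * ε i)) := by
          rw [map_mul, aeval_X]; ring
        rw [this]
        exact Submodule.add_mem _ (Ideal.mul_mem_right _ _ hp) (mulX _ i)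
    rw [Algebra.Generators.ker_eq_ker_aeval_val]
    apply le_antisymm
    · rw [Ideal.span_le]
      rintro _ ⟨o, rfl⟩
      rcases o with _ | ⟨i, j⟩
      · show (1 : MvPolynomial (Fin n) A) - linB ε 1 ∈ RingHom.ker (aeval (ε : Fin n → B))
        rw [RingHom.mem_ker, map_sub, map_one]
        rw [show (aeval (ε : Fin n → B)) ((linB ε) 1) = 1 from aeval_linB ε 1, sub_self]
      · show X i * X j - linB ε (ε i * ε j) ∈ RingHom.ker (aeval (ε : Fin n → B))
        rw [RingHom.mem_ker, map_sub, map_mul, aeval_X, aeval_X,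
          show (aeval (ε : Fin n → B)) ((linB ε) (ε i * ε j)) = ε i * ε j from aeval_linB ε _,
          sub_self]
    · intro p hp
      rw [RingHom.mem_ker] at hp
      have := key p
      rwa [hp, map_zero, sub_zero] at this


lemma finitePresentation_kaehler (ε : Module.Basis (Fin n) A B) :
    Module.FinitePresentation B (Ω[B⁄A]) := by
  haveI h1 : Finite ((Algebra.Presentation.differentials (presOf ε)).G) :=
    inferInstanceAs (Finite (Fin n))
  haveI h2 : Finite ((Algebra.Presentation.differentials (presOf ε)).R) :=
    inferInstanceAs (Finite (Option (Fin n × Fin n)))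
  exact Module.Presentation.finitePresentation (Algebra.Presentation.differentials (presOf ε))



lemma stepC {n : ℕ} (ε : Module.Basis (Fin n) A B) (δ : B ⊗[A] B)
    (hδ : ∀ x ∈ KaehlerDifferential.ideal A B, δ * x = 0) :
    Algebra.discr A ε ∣ Algebra.norm A (Algebra.TensorProduct.lmul' (S := B) A δ) := by
  classical
  set β := ε.baseChange B with hβ
  set c : Fin n → B := fun k => β.repr δ k with hc
  have key : ∀ y : B, δ * ((1:B) ⊗ₜ[A] y) = y • δ := by
    intro y
    have h0 := hδ _ (KaehlerDifferential.one_smul_sub_smul_one_mem_ideal A y)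
    have h1 : δ * ((1:B) ⊗ₜ[A] y) = δ * (y ⊗ₜ[A] (1:B)) := by
      rw [← sub_eq_zero, ← mul_sub, h0]
    rw [h1, Algebra.smul_def]
    rw [mul_comm]
    congr 1
  have expand : ∀ y : B, δ * ((1:B) ⊗ₜ[A] y) = ∑ k, c k • ((1:B) ⊗ₜ[A] (ε k * y)) := by
    intro y
    conv_lhs => rw [← β.sum_repr δ]
    rw [Finset.sum_mul]
    refine Finset.sum_congr rfl fun k _ => ?_
    rw [smul_mul_assoc, hβ, Module.Basis.baseChange_apply, Algebra.TensorProduct.tmul_mul_tmul, one_mul]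
  have dagger : ∀ (y : B) (i : Fin n),
      y * c i = ∑ k, c k * algebraMap A B (ε.repr (ε k * y) i) := by
    intro y i
    have h1 : β.repr (y • δ) i = y * c i := by rw [map_smul]; simp [hc]
    have h2 : β.repr (δ * ((1:B) ⊗ₜ[A] y)) i
        = ∑ k, c k * algebraMap A B (ε.repr (ε k * y) i) := by
      rw [expand y, map_sum]
      rw [Finsupp.finset_sum_apply]
      refine Finset.sum_congr rfl fun k _ => ?_
      rw [map_smul, Finsupp.smul_apply, hβ, Module.Basis.baseChange_repr_tmul, smul_eq_mul,
        Algebra.algebraMap_eq_smul_one]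
    rw [← h1, ← key y, h2]
  set b := Algebra.TensorProduct.lmul' (S := B) A δ with hbdef
  have hb : b = ∑ k, c k * ε k := by
    rw [hbdef]
    conv_lhs => rw [← β.sum_repr δ]
    rw [map_sum]
    refine Finset.sum_congr rfl fun k _ => ?_
    rw [hβ, Module.Basis.baseChange_apply, TensorProduct.smul_tmul', smul_eq_mul, mul_one,
      Algebra.TensorProduct.lmul'_apply_tmul]
  have K2 : ∀ x : B, b * x = ∑ k, c k * algebraMap A B (Algebra.trace A B (x * ε k)) := by
    intro x
    have : b * x = ∑ i, (ε i * x) * c i := by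
      rw [hb, Finset.sum_mul]
      exact Finset.sum_congr rfl fun i _ => by ring
    rw [this]
    have : ∀ i, (ε i * x) * c i = ∑ k, c k * algebraMap A B (ε.repr (ε k * (ε i * x)) i) :=
      fun i => dagger (ε i * x) i
    rw [Finset.sum_congr rfl fun i _ => this i, Finset.sum_comm]
    refine Finset.sum_congr rfl fun k _ => ?_
    rw [← Finset.mul_sum, ← map_sum]
    congr 2
    rw [Algebra.trace_eq_matrix_trace ε, Matrix.trace]
    refine Finset.sum_congr rfl fun i _ => ?_
    rw [Matrix.diag_apply, Algebra.leftMulMatrix_eq_repr_mul]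
    congr 2
    ring
  set Γ : Matrix (Fin n) (Fin n) A := fun i k => ε.repr (c k) i with hΓ
  have K3 : Algebra.leftMulMatrix ε b = Γ * Algebra.traceMatrix A ε := by
    ext i j
    rw [Algebra.leftMulMatrix_eq_repr_mul, K2 (ε j), map_sum, Finsupp.finset_sum_apply,
      Matrix.mul_apply]
    refine Finset.sum_congr rfl fun k _ => ?_
    rw [mul_comm (c k), ← Algebra.smul_def, map_smul, Finsupp.smul_apply, smul_eq_mul]
    rw [Algebra.traceMatrix_apply, Algebra.traceForm_apply, hΓ]
    rw [mul_comm (ε j) (ε k)]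
    ring
  rw [Algebra.norm_eq_matrix_det ε, K3, Matrix.det_mul, Algebra.discr_def]
  exact Dvd.intro_left _ rfl



lemma stepB [Algebra.EssFiniteType A B] {N : ℕ}
    (f : (Fin N → B) →ₗ[B] (Ω[B⁄A])) (hf : Function.Surjective f)
    (P : Matrix (Fin N) (Fin N) B) (hP : ∀ i, P i ∈ LinearMap.ker f) :
    ∃ δ : B ⊗[A] B, (∀ x ∈ KaehlerDifferential.ideal A B, δ * x = 0) ∧
      Algebra.TensorProduct.lmul' (S := B) A δ = P.det := by
  classical
  set I : Ideal (B ⊗[A] B) := KaehlerDifferential.ideal A B with hI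
  set ω : Fin N → (Ω[B⁄A]) := fun j => f (fun k => if j = k then 1 else 0) with hω
  choose x hx using fun j => Ideal.toCotangent_surjective I (ω j)
  set J : Submodule (B ⊗[A] B) (B ⊗[A] B) :=
    Submodule.span (B ⊗[A] B) (Set.range fun j => (x j : B ⊗[A] B)) with hJ
  -- every element of I is congruent mod I^2 to an element of J
  have hmod : ∀ z ∈ I, ∃ u ∈ J, z - u ∈ I ^ 2 := by
    intro z hz
    obtain ⟨v, hv⟩ := hf (I.toCotangent ⟨z, hz⟩)
    have hv' : I.toCotangent ⟨z, hz⟩ = ∑ j, algebraMap B (B ⊗[A] B) (v j) • ω j := by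
      rw [← hv, LinearMap.pi_apply_eq_sum_univ f v]
      exact Finset.sum_congr rfl fun j _ => by rw [algebraMap_smul]
    have hsum : I.toCotangent ⟨z, hz⟩ =
        I.toCotangent (∑ j, algebraMap B (B ⊗[A] B) (v j) • x j) := by
      rw [map_sum, hv']
      exact Finset.sum_congr rfl fun j _ => by rw [map_smul, hx]; rfl
    refine ⟨((∑ j, algebraMap B (B ⊗[A] B) (v j) • x j : I) : B ⊗[A] B), ?_, ?_⟩
    · rw [Submodule.coe_sum]
      refine Submodule.sum_mem _ fun j _ => ?_
      rw [Submodule.coe_smul]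
      exact Submodule.smul_mem _ _ (Submodule.subset_span ⟨j, rfl⟩)
    · exact ((Ideal.toCotangent_eq _).mp hsum)
  -- Nakayama
  have hIJ : Submodule.map J.mkQ (I.restrictScalars (B ⊗[A] B)) ≤
      I • Submodule.map J.mkQ (I.restrictScalars (B ⊗[A] B)) := by
    rintro _ ⟨z, hz, rfl⟩
    obtain ⟨u, hu, hzu⟩ := hmod z hz
    have hu0 : J.mkQ u = 0 := by rwa [Submodule.mkQ_apply, Submodule.Quotient.mk_eq_zero]
    have h1 : J.mkQ z = J.mkQ (z - u) := by rw [map_sub, hu0, sub_zero]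
    rw [h1]
    have h2 : J.mkQ (z - u) ∈ Submodule.map J.mkQ ((I • I : Ideal _).restrictScalars _) := by
      exact ⟨z - u, by simpa [Ideal.smul_eq_mul, pow_two] using hzu, rfl⟩
    revert h2
    generalize J.mkQ (z - u) = w
    intro h2
    have : Submodule.map J.mkQ ((I • I : Ideal _).restrictScalars (B ⊗[A] B)) ≤
        I • Submodule.map J.mkQ (I.restrictScalars (B ⊗[A] B)) := by
      rw [← Submodule.map_smul'']
      exact Submodule.map_mono le_rfl
    exact this h2
  obtain ⟨η, hη1, hη0⟩ := Submodule.exists_sub_one_mem_and_smul_eq_zero_of_fg_of_le_smul I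
    (Submodule.map J.mkQ (I.restrictScalars (B ⊗[A] B)))
    (Submodule.FG.map _ (KaehlerDifferential.ideal_fg A B)) hIJ
  have hηJ : ∀ z ∈ I, η * z ∈ J := by
    intro z hz
    have := hη0 (J.mkQ z) ⟨z, hz, rfl⟩
    rwa [← map_smul, Submodule.mkQ_apply, Submodule.Quotient.mk_eq_zero, smul_eq_mul] at this
  have hημ : Algebra.TensorProduct.lmul' (S := B) A η = 1 := by
    have : Algebra.TensorProduct.lmul' (S := B) A (η - 1) = 0 := hη1
    rw [map_sub, map_one, sub_eq_zero] at this
    exact this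
  -- the relations
  set q : Fin N → (B ⊗[A] B) := fun i => ∑ j, algebraMap B (B ⊗[A] B) (P i j) * (x j : B ⊗[A] B)
    with hq
  have hqI : ∀ i, q i ∈ I := fun i =>
    Submodule.sum_mem _ fun j _ => I.mul_mem_left _ (x j).2
  have hqI2 : ∀ i, q i ∈ I ^ 2 := by
    intro i
    have h0 : I.toCotangent ⟨q i, hqI i⟩ = 0 := by
      have : (⟨q i, hqI i⟩ : I) = ∑ j, algebraMap B (B ⊗[A] B) (P i j) • x j := by
        ext
        simp only [AddSubmonoidClass.coe_finset_sum, SetLike.val_smul, smul_eq_mul]; rfl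
      rw [this, map_sum]
      have : ∀ j, I.toCotangent (algebraMap B (B ⊗[A] B) (P i j) • x j) = P i j • ω j := by
        intro j
        rw [map_smul, hx]; exact algebraMap_smul (B ⊗[A] B) (P i j) (ω j)
      rw [Finset.sum_congr rfl fun j _ => this j]
      have := hP i
      rw [LinearMap.mem_ker] at this
      exact (LinearMap.pi_apply_eq_sum_univ f (P i)).symm.trans this
    rwa [Ideal.toCotangent_eq_zero] at h0
  have hηq : ∀ i, η * q i ∈ I • J := by
    intro i
    have h2 : q i ∈ I • (I : Submodule _ _) := by
      rw [Ideal.smul_eq_mul, ← pow_two]; exact hqI2 i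
    refine Submodule.smul_induction_on h2 ?_ ?_
    · intro r hr z hz
      have heq : η * (r • z) = r • (η * z) := by
        rw [smul_eq_mul, smul_eq_mul]; ring
      rw [heq]
      exact Submodule.smul_mem_smul hr (hηJ _ hz)
    · intro w₁ w₂ h₁ h₂
      rw [mul_add]
      exact Submodule.add_mem _ h₁ h₂
  have hg : ∀ i, ∃ g : Fin N → (B ⊗[A] B), (∀ j, g j ∈ I) ∧
      ∑ j, g j * (x j : B ⊗[A] B) = η * q i := by
    intro i
    obtain ⟨a, ha, hsum⟩ := (Submodule.mem_ideal_smul_span_iff_exists_sum I _ _).mp (hηq i)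
    refine ⟨fun j => a j, fun j => ha j, ?_⟩
    rw [← hsum, Finsupp.sum_fintype]
    · exact Finset.sum_congr rfl fun j _ => by rw [smul_eq_mul]
    · intro j; rw [zero_smul]
  choose g hgI hgsum using hg
  set Q : Matrix (Fin N) (Fin N) (B ⊗[A] B) :=
    fun i j => η * algebraMap B (B ⊗[A] B) (P i j) - g i j with hQ
  have hQx : ∀ i, ∑ j, Q i j * (x j : B ⊗[A] B) = 0 := by
    intro i
    have : ∑ j, Q i j * (x j : B ⊗[A] B)
        = η * q i - ∑ j, g i j * (x j : B ⊗[A] B) := by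
      rw [hq]
      simp only [hQ, sub_mul, Finset.sum_sub_distrib, Finset.mul_sum]
      congr 1
      exact Finset.sum_congr rfl fun j _ => by ring
    rw [this, hgsum i, sub_self]
  -- Cramer
  have hdet : ∀ j, Q.det * (x j : B ⊗[A] B) = 0 := by
    have h0 : Q.mulVec (fun j => (x j : B ⊗[A] B)) = 0 := by
      funext i
      rw [Matrix.mulVec, dotProduct]
      exact hQx i
    have h1 : (Q.adjugate * Q).mulVec (fun j => (x j : B ⊗[A] B)) = 0 := by
      rw [← Matrix.mulVec_mulVec, h0, Matrix.mulVec_zero]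
    rw [Matrix.adjugate_mul, Matrix.smul_mulVec, Matrix.one_mulVec] at h1
    intro j
    have := congrFun h1 j
    rwa [Pi.smul_apply, Pi.zero_apply, smul_eq_mul] at this
  refine ⟨Q.det * η, ?_, ?_⟩
  · intro z hz
    have hmem : η * z ∈ J := hηJ z hz
    rw [hJ] at hmem
    obtain ⟨cc, hcc⟩ := (Submodule.mem_span_range_iff_exists_fun _).mp hmem
    rw [mul_assoc, ← hcc, Finset.mul_sum]
    refine Finset.sum_eq_zero fun j _ => ?_
    rw [smul_eq_mul, ← mul_assoc, mul_comm Q.det (cc j), mul_assoc, hdet j, mul_zero]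
  · rw [map_mul, hημ, mul_one, ← RingHom.coe_coe, RingHom.map_det]
    congr 1
    ext i j
    rw [RingHom.mapMatrix_apply]
    simp only [Matrix.map_apply, hQ, RingHom.coe_coe, map_sub, map_mul, hημ]
    have h1 : Algebra.TensorProduct.lmul' (S := B) A (algebraMap B (B ⊗[A] B) (P i j))
        = P i j := by
      simp [Algebra.TensorProduct.algebraMap_apply]
    have h2 : Algebra.TensorProduct.lmul' (S := B) A (g i j) = 0 := hgI i j
    show Algebra.TensorProduct.lmul' (S := B) A (η * algebraMap B (B ⊗[A] B) (P i j) - g i j) = P i j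
    rw [map_sub, map_mul, hημ, h1, h2, one_mul, sub_zero]

end Aux


/-- The 0-th Fitting ideal of a module `M` over `R`: for a finitely presented module it is
the ideal generated by the `n × n` minors of a relation matrix of any presentation of `M`
with `n` generators; equivalently (by Fitting's lemma, which guarantees independence of the
presentation) the ideal generated by the determinants of all `n × n` matrices whose rows are
relations among the `n` generators.  We take the supremum over all finite presentations. -/
noncomputable def fittingIdeal0 (R M : Type*) [CommRing R] [AddCommGroup M] [Module R M] :
    Ideal R :=
  ⨆ (n : ℕ) (f : (Fin n → R) →ₗ[R] M) (_ : Function.Surjective f),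
    Ideal.span { d : R | ∃ P : Matrix (Fin n) (Fin n) R,
      (∀ i, P i ∈ LinearMap.ker f) ∧ d = P.det }

/-- Let `B` be a commutative `A`-algebra that is free of finite rank `n` as an
`A`-module.  Then the `B`-module of Kähler differentials `Ω[B⁄A]` is finitely presented, and
for every element `b` of its 0-th Fitting ideal, the discriminant of any `A`-basis of `B`
divides the norm `N_{B/A}(b)` in `A`. -/

theorem free_algebra_discr_dvd_norm_of_mem_fittingIdeal
    (A B : Type*) [CommRing A] [CommRing B] [Algebra A B]
    (n : ℕ) (ε : Module.Basis (Fin n) A B) :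
    Module.FinitePresentation B (Ω[B⁄A]) ∧
      ∀ b ∈ fittingIdeal0 B (Ω[B⁄A]), Algebra.discr A ε ∣ Algebra.norm A b := by
  classical
  refine ⟨finitePresentation_kaehler ε, ?_⟩
  intro b hb
  haveI : Module.Finite A B := Module.Finite.of_basis ε
  haveI : Algebra.EssFiniteType A B := inferInstance
  set μ : (B ⊗[A] B) →ₐ[A] B := Algebra.TensorProduct.lmul' (S := B) A with hμ
  have hμsurj : Function.Surjective μ := fun y => ⟨y ⊗ₜ 1, by
    simp [hμ, Algebra.TensorProduct.lmul'_apply_tmul]⟩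
  set D : Ideal B := Ideal.map (μ : (B ⊗[A] B) →+* B)
    (Submodule.annihilator (KaehlerDifferential.ideal A B : Submodule (B ⊗[A] B) (B ⊗[A] B)))
    with hD
  have hle : fittingIdeal0 B (Ω[B⁄A]) ≤ D := by
    refine iSup_le fun N => iSup_le fun f => iSup_le fun hf => ?_
    rw [Ideal.span_le]
    rintro d ⟨P, hP, rfl⟩
    obtain ⟨δ, hann, hμδ⟩ := stepB f hf P hP
    rw [← hμδ]
    refine Ideal.mem_map_of_mem _ (Submodule.mem_annihilator.mpr fun z hz => ?_)
    rw [smul_eq_mul]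
    exact hann z hz
  obtain ⟨δ, hδann, hδb⟩ := Ideal.mem_map_iff_of_surjective _ hμsurj |>.mp (hle hb)
  rw [← hδb]
  exact stepC ε δ fun x hx => by
    have := Submodule.mem_annihilator.mp hδann x hx
    rwa [smul_eq_mul] at this
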